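/- arXiv:2509.05812 — 3 statements merged into one kernel-verified Lean document; each statement's English description precedes it below -/
import Mathlib

section
/- For every integer d ≥ 1 and every vector of positive real numbers f(1), …, f(d) with f(1) + ⋯ + f(d) = 1, there exists a sequence v : ℕ → {1, …, d} such that v is ⌈log₂ d⌉-balanced and, for each letter i ∈ {1, …, d}, the letter i has frequency f(i) in v. (In particular, the balancedness threshold satisfies BT(d) ≤ ⌈log₂ d⌉.) -/
open Finset Filter Topology

/-- Number of occurrences of the letter `c` in the factor of `u` of length `n`
starting at position `i`, i.e. `#{t : i ≤ t < i+n, u t = c}`. -/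
def cnt {A : Type*} [DecidableEq A] (u : ℕ → A) (c : A) (i n : ℕ) : ℕ :=
  ((Finset.Ico i (i + n)).filter (fun t => u t = c)).card

/-- A sequence `u` is `k`-balanced if the numbers of occurrences of any letter in
any two factors of the same length differ by at most `k`. -/
def IsBalanced {A : Type*} [DecidableEq A] (k : ℕ) (u : ℕ → A) : Prop :=
  ∀ i j n : ℕ, ∀ c : A, ((cnt u c i n : ℤ) - (cnt u c j n : ℤ)).natAbs ≤ k

/-- The letter `c` has frequency `f` in the sequence `u`. -/
def HasFreq {A : Type*} [DecidableEq A] (u : ℕ → A) (c : A) (f : ℝ) : Prop :=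
  Tendsto (fun n : ℕ => (cnt u c 0 n : ℝ) / n) atTop (𝓝 f)

lemma cnt_succ {A : Type*} [DecidableEq A] (u : ℕ → A) (c : A) (i n : ℕ) :
    cnt u c i (n+1) = cnt u c i n + (if u (i+n) = c then 1 else 0) := by
  unfold cnt
  have : Finset.Ico i (i + (n+1)) = insert (i+n) (Finset.Ico i (i+n)) := by
    rw [← Nat.add_assoc, Nat.Ico_succ_right_eq_insert_Ico (Nat.le_add_right _ _)]
  rw [this, Finset.filter_insert]
  split
  · rw [Finset.card_insert_of_notMem (by simp)]
  · simp

lemma cnt_le_len {A : Type*} [DecidableEq A] (u : ℕ → A) (c : A) (i n : ℕ) :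
    cnt u c i n ≤ n := by
  calc cnt u c i n ≤ (Finset.Ico i (i+n)).card := Finset.card_filter_le _ _
  _ = n := by simp

lemma cnt_window_add {A : Type*} [DecidableEq A] (u : ℕ → A) (c : A) (i n m : ℕ) :
    cnt u c i (n + m) = cnt u c i n + cnt u c (i+n) m := by
  unfold cnt
  rw [← Nat.add_assoc, ← Finset.card_union_of_disjoint (Finset.disjoint_filter_filter
        (Finset.Ico_disjoint_Ico_consecutive i (i+n) (i+n+m))), ← Finset.filter_union,
    Finset.Ico_union_Ico_eq_Ico (Nat.le_add_right _ _) (Nat.le_add_right _ _)]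

lemma cnt_prefix_add {A : Type*} [DecidableEq A] (u : ℕ → A) (c : A) (i n : ℕ) :
    cnt u c 0 (i + n) = cnt u c 0 i + cnt u c i n := by
  have := cnt_window_add u c 0 i n
  simpa using this

lemma cnt_bool_partition (s : ℕ → Bool) (i n : ℕ) :
    cnt s true i n + cnt s false i n = n := by
  induction n with
  | zero => simp [cnt]
  | succ n ih =>
    have h1 := cnt_succ s true i n
    have h2 := cnt_succ s false i n
    cases h : s (i+n) <;> simp [h] at h1 h2 <;> omega

lemma cnt_comp {A B : Type*} [DecidableEq A] [DecidableEq B]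
    (v : ℕ → A) (u : ℕ → B) (s : ℕ → Bool) (b : Bool) (c : B) (cd : A)
    (h : ∀ n, v n = cd ↔ (s n = b ∧ u (cnt s b 0 n) = c)) :
    ∀ N, cnt v cd 0 N = cnt u c 0 (cnt s b 0 N) := by
  intro N
  induction N with
  | zero => simp [cnt]
  | succ N ih =>
    have h1 : cnt v cd 0 (N+1) = cnt v cd 0 N + (if v N = cd then 1 else 0) := by
      simpa using cnt_succ v cd 0 N
    have h2 : cnt s b 0 (N+1) = cnt s b 0 N + (if s N = b then 1 else 0) := by
      simpa using cnt_succ s b 0 N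
    by_cases hs : s N = b
    · have h3 : cnt u c 0 (cnt s b 0 N + 1) =
          cnt u c 0 (cnt s b 0 N) + (if u (cnt s b 0 N) = c then 1 else 0) := by
        simpa using cnt_succ u c 0 (cnt s b 0 N)
      rw [h1, h2, if_pos hs, h3, ih]
      congr 1
      by_cases hu : u (cnt s b 0 N) = c
      · rw [if_pos hu, if_pos ((h N).2 ⟨hs, hu⟩)]
      · rw [if_neg hu, if_neg (fun hv => hu ((h N).1 hv).2)]
    · rw [h1, h2, if_neg hs, if_neg (fun hv => hs ((h N).1 hv).1), ih]
      simp

lemma cnt_comp_window {A B : Type*} [DecidableEq A] [DecidableEq B]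
    (v : ℕ → A) (u : ℕ → B) (s : ℕ → Bool) (b : Bool) (c : B) (cd : A)
    (h : ∀ n, v n = cd ↔ (s n = b ∧ u (cnt s b 0 n) = c)) (i n : ℕ) :
    cnt v cd i n = cnt u c (cnt s b 0 i) (cnt s b i n) := by
  have e1 := cnt_comp v u s b c cd h (i+n)
  have e2 := cnt_comp v u s b c cd h i
  have e3 := cnt_prefix_add v cd i n
  have e4 := cnt_prefix_add s b i n
  have e5 := cnt_prefix_add u c (cnt s b 0 i) (cnt s b i n)
  rw [e4] at e1
  rw [e3, e2, e5] at e1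
  omega

/-- windows of `u` whose lengths differ by at most 1 have counts differing by at most k+1. -/
lemma balanced_window_step {B : Type*} [DecidableEq B] {k : ℕ} {u : ℕ → B}
    (hu : ∀ i j n : ℕ, ∀ c : B, ((cnt u c i n : ℤ) - (cnt u c j n : ℤ)).natAbs ≤ k)
    (c : B) (p q n1 n2 : ℕ) (hn : n1 ≤ n2 + 1 ∧ n2 ≤ n1 + 1) :
    ((cnt u c p n1 : ℤ) - (cnt u c q n2 : ℤ)).natAbs ≤ k + 1 := by
  rcases Nat.lt_trichotomy n1 n2 with h | h | h
  · have hn2 : n2 = n1 + 1 := by omega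
    subst hn2
    have h1 := hu p q n1 c
    have h2 := cnt_succ u c q n1
    have h3 : (if u (q + n1) = c then 1 else 0) ≤ 1 := by split <;> omega
    omega
  · subst h
    have h1 := hu p q n1 c
    omega
  · have hn1 : n1 = n2 + 1 := by omega
    subst hn1
    have h1 := hu p q n2 c
    have h2 := cnt_succ u c p n2
    have h3 : (if u (p + n2) = c then 1 else 0) ≤ 1 := by split <;> omega
    omega

noncomputable def stA (α : ℝ) (n : ℕ) : ℕ := (⌊(n : ℝ) * α⌋).toNat

noncomputable def stS (α : ℝ) (n : ℕ) : Bool := decide (stA α (n+1) = stA α n + 1)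

lemma stA_cast {α : ℝ} (hα : 0 ≤ α) (n : ℕ) : (stA α n : ℤ) = ⌊(n : ℝ) * α⌋ :=
  Int.toNat_of_nonneg (Int.floor_nonneg.2 (by positivity))

lemma stA_step {α : ℝ} (hα : 0 ≤ α) (hα1 : α ≤ 1) (n : ℕ) :
    stA α n ≤ stA α (n+1) ∧ stA α (n+1) ≤ stA α n + 1 := by
  have hc1 := stA_cast hα n
  have hc2 := stA_cast hα (n+1)
  have hmono : ⌊(n : ℝ) * α⌋ ≤ ⌊((n+1 : ℕ) : ℝ) * α⌋ := by
    apply Int.floor_le_floor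
    have : (0:ℝ) ≤ α := hα
    push_cast
    nlinarith
  have hup : ⌊((n+1 : ℕ) : ℝ) * α⌋ ≤ ⌊(n : ℝ) * α⌋ + 1 := by
    have : ((n+1 : ℕ) : ℝ) * α ≤ (n : ℝ) * α + 1 := by push_cast; nlinarith
    calc ⌊((n+1 : ℕ) : ℝ) * α⌋ ≤ ⌊(n : ℝ) * α + 1⌋ := Int.floor_le_floor this
    _ = ⌊(n : ℝ) * α⌋ + 1 := by exact_mod_cast Int.floor_add_intCast ((n:ℝ)*α) 1
  omega

lemma stA_cnt_true {α : ℝ} (hα : 0 ≤ α) (hα1 : α ≤ 1) (i : ℕ) :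
    ∀ n, cnt (stS α) true i n + stA α i = stA α (i+n) := by
  intro n
  induction n with
  | zero => simp [cnt]
  | succ n ih =>
    have h := cnt_succ (stS α) true i n
    have hstep := stA_step hα hα1 (i+n)
    have hsiff : (stS α (i+n) = true) ↔ stA α (i+n+1) = stA α (i+n) + 1 := by
      simp [stS]
    have hgoal : stA α (i+(n+1)) = stA α (i+n+1) := by ring_nf
    by_cases hc : stA α (i+n+1) = stA α (i+n) + 1
    · rw [h, if_pos (hsiff.2 hc)]
      omega
    · rw [h, if_neg (fun hh => hc (hsiff.1 hh))]
      omega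

/-- real bounds on the count of `true` in a window -/
lemma stA_window_bounds {α : ℝ} (hα : 0 ≤ α) (i n : ℕ) :
    (n : ℝ) * α - 1 < (stA α (i+n) : ℝ) - (stA α i : ℝ) ∧
    (stA α (i+n) : ℝ) - (stA α i : ℝ) < (n : ℝ) * α + 1 := by
  have hc1 : ((stA α i : ℤ) : ℝ) = ((⌊(i : ℝ) * α⌋ : ℤ) : ℝ) := by rw [stA_cast hα]
  have hc2 : ((stA α (i+n) : ℤ) : ℝ) = ((⌊((i+n : ℕ) : ℝ) * α⌋ : ℤ) : ℝ) := by
    rw [stA_cast hα]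
  have h1 : ((i+n : ℕ) : ℝ) * α - 1 < ((⌊((i+n : ℕ) : ℝ) * α⌋ : ℤ) : ℝ) :=
    Int.sub_one_lt_floor _
  have h2 : ((⌊((i+n : ℕ) : ℝ) * α⌋ : ℤ) : ℝ) ≤ ((i+n : ℕ) : ℝ) * α := Int.floor_le _
  have h3 : ((i : ℕ) : ℝ) * α - 1 < ((⌊(i : ℝ) * α⌋ : ℤ) : ℝ) := Int.sub_one_lt_floor _
  have h4 : ((⌊(i : ℝ) * α⌋ : ℤ) : ℝ) ≤ (i : ℝ) * α := Int.floor_le _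
  push_cast at hc1 hc2 h1 h2 h3 h4 ⊢
  constructor <;> nlinarith

/-- counts of `true` in two windows of the same length differ by at most 1 -/
lemma stS_true_balanced {α : ℝ} (hα : 0 ≤ α) (hα1 : α ≤ 1) (i j n : ℕ) :
    ((cnt (stS α) true i n : ℤ) - (cnt (stS α) true j n : ℤ)).natAbs ≤ 1 := by
  have ei := stA_cnt_true hα hα1 i n
  have ej := stA_cnt_true hα hα1 j n
  have bi := stA_window_bounds hα i n
  have bj := stA_window_bounds hα j n
  have hi : (cnt (stS α) true i n : ℝ) = (stA α (i+n) : ℝ) - (stA α i : ℝ) := by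
    have : (cnt (stS α) true i n : ℝ) + (stA α i : ℝ) = (stA α (i+n) : ℝ) := by
      exact_mod_cast congrArg (Nat.cast : ℕ → ℝ) ei
    linarith
  have hj : (cnt (stS α) true j n : ℝ) = (stA α (j+n) : ℝ) - (stA α j : ℝ) := by
    have : (cnt (stS α) true j n : ℝ) + (stA α j : ℝ) = (stA α (j+n) : ℝ) := by
      exact_mod_cast congrArg (Nat.cast : ℕ → ℝ) ej
    linarith
  have d1 : (cnt (stS α) true i n : ℝ) - (cnt (stS α) true j n : ℝ) < 2 := by
    rw [hi, hj]; linarith [bi.1, bi.2, bj.1, bj.2]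
  have d2 : (cnt (stS α) true j n : ℝ) - (cnt (stS α) true i n : ℝ) < 2 := by
    rw [hi, hj]; linarith [bi.1, bi.2, bj.1, bj.2]
  have d1' : (cnt (stS α) true i n : ℤ) - (cnt (stS α) true j n : ℤ) < 2 := by
    exact_mod_cast d1
  have d2' : (cnt (stS α) true j n : ℤ) - (cnt (stS α) true i n : ℤ) < 2 := by
    exact_mod_cast d2
  omega

lemma stS_false_balanced {α : ℝ} (hα : 0 ≤ α) (hα1 : α ≤ 1) (i j n : ℕ) :
    ((cnt (stS α) false i n : ℤ) - (cnt (stS α) false j n : ℤ)).natAbs ≤ 1 := by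
  have hi := cnt_bool_partition (stS α) i n
  have hj := cnt_bool_partition (stS α) j n
  have := stS_true_balanced hα hα1 i j n
  omega

/-- frequency of `true` in the Sturmian word is α -/
lemma stS_freq_true {α : ℝ} (hα : 0 ≤ α) (hα1 : α ≤ 1) :
    Tendsto (fun n : ℕ => (cnt (stS α) true 0 n : ℝ) / n) atTop (𝓝 α) := by
  have key : ∀ n : ℕ, 1 ≤ n → α - 1/n ≤ (cnt (stS α) true 0 n : ℝ) / n ∧
      (cnt (stS α) true 0 n : ℝ) / n ≤ α := by
    intro n hn
    have hnpos : (0:ℝ) < n := by exact_mod_cast hn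
    have e := stA_cnt_true hα hα1 0 n
    have b := stA_window_bounds hα 0 n
    simp only [Nat.zero_add] at e b
    have h0 : stA α 0 = 0 := by simp [stA]
    rw [h0] at e b
    have hc : (cnt (stS α) true 0 n : ℝ) = (stA α n : ℝ) := by
      exact_mod_cast congrArg (Nat.cast : ℕ → ℝ) (by omega : cnt (stS α) true 0 n = stA α n)
    push_cast at b
    have hfl : (stA α n : ℝ) ≤ (n:ℝ)*α := by
      have h1 := Int.floor_le ((n:ℝ)*α)
      have h2 := stA_cast hα n
      rw [← h2] at h1
      exact_mod_cast h1
    have h1n : (1/(n:ℝ))*n = 1 := by field_simp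
    constructor
    · rw [hc, le_div_iff₀ hnpos]
      nlinarith [b.1]
    · rw [hc, div_le_iff₀ hnpos]
      nlinarith
  apply tendsto_of_tendsto_of_tendsto_of_le_of_le'
    (g := fun n : ℕ => α - 1/(n:ℝ)) (h := fun _ : ℕ => α)
  · have : Tendsto (fun n : ℕ => 1/(n:ℝ)) atTop (𝓝 0) := tendsto_one_div_atTop_nhds_zero_nat
    simpa using tendsto_const_nhds.sub this
  · exact tendsto_const_nhds
  · filter_upwards [eventually_ge_atTop 1] with n hn using (key n hn).1
  · filter_upwards [eventually_ge_atTop 1] with n hn using (key n hn).2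

lemma stS_freq_false {α : ℝ} (hα : 0 ≤ α) (hα1 : α ≤ 1) :
    Tendsto (fun n : ℕ => (cnt (stS α) false 0 n : ℝ) / n) atTop (𝓝 (1 - α)) := by
  have h := stS_freq_true hα hα1
  have key : ∀ n : ℕ, (cnt (stS α) false 0 n : ℝ) / n = n/n - (cnt (stS α) true 0 n : ℝ) / n := by
    intro n
    have := cnt_bool_partition (stS α) 0 n
    have hcast : (cnt (stS α) true 0 n : ℝ) + (cnt (stS α) false 0 n : ℝ) = n := by
      exact_mod_cast congrArg (Nat.cast : ℕ → ℝ) this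
    rw [← sub_div]
    congr 1
    linarith
  have hnn : Tendsto (fun n : ℕ => (n:ℝ)/n) atTop (𝓝 1) := by
    have hev : (fun _ : ℕ => (1:ℝ)) =ᶠ[atTop] fun n : ℕ => (n:ℝ)/n := by
      filter_upwards [eventually_ge_atTop 1] with n hn
      have : (0:ℝ) < n := by exact_mod_cast hn
      field_simp
    exact Tendsto.congr' hev tendsto_const_nhds
  have := hnn.sub h
  refine this.congr (fun n => (key n).symm)

/-- count of `b` tends to infinity when the frequency is positive -/
lemma cnt_tendsto_atTop {s : ℕ → Bool} {b : Bool} {γ : ℝ} (hγ : 0 < γ)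
    (h : Tendsto (fun n : ℕ => (cnt s b 0 n : ℝ) / n) atTop (𝓝 γ)) :
    Tendsto (fun n : ℕ => cnt s b 0 n) atTop atTop := by
  rw [← tendsto_natCast_atTop_iff (R := ℝ)]
  have hev : ∀ᶠ n : ℕ in atTop, (γ/2) * n ≤ (cnt s b 0 n : ℝ) := by
    have h2 : ∀ᶠ n : ℕ in atTop, γ/2 < (cnt s b 0 n : ℝ) / n :=
      h.eventually (eventually_gt_nhds (by linarith))
    filter_upwards [h2, eventually_ge_atTop 1] with n hn hn1
    have hnpos : (0:ℝ) < n := by exact_mod_cast hn1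
    rw [lt_div_iff₀ hnpos] at hn
    nlinarith
  apply tendsto_atTop_mono' _ hev
  exact Tendsto.const_mul_atTop (by linarith) tendsto_natCast_atTop_atTop

lemma balanced_transfer {A B : Type*} [DecidableEq A] [DecidableEq B] {k : ℕ}
    (v : ℕ → A) (u : ℕ → B) (s : ℕ → Bool) (b : Bool) (c : B) (cd : A)
    (h : ∀ n, v n = cd ↔ (s n = b ∧ u (cnt s b 0 n) = c))
    (hs : ∀ i j n : ℕ, ((cnt s b i n : ℤ) - (cnt s b j n : ℤ)).natAbs ≤ 1)
    (hu : ∀ i j n : ℕ, ∀ c : B, ((cnt u c i n : ℤ) - (cnt u c j n : ℤ)).natAbs ≤ k)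
    (i j n : ℕ) :
    ((cnt v cd i n : ℤ) - (cnt v cd j n : ℤ)).natAbs ≤ k + 1 := by
  rw [cnt_comp_window v u s b c cd h i n, cnt_comp_window v u s b c cd h j n]
  have hwin := hs i j n
  exact balanced_window_step hu c (cnt s b 0 i) (cnt s b 0 j) (cnt s b i n) (cnt s b j n)
    (by omega)

lemma hasfreq_transfer {A B : Type*} [DecidableEq A] [DecidableEq B]
    (v : ℕ → A) (u : ℕ → B) (s : ℕ → Bool) (b : Bool) (c : B) (cd : A) {γ g : ℝ}
    (h : ∀ n, v n = cd ↔ (s n = b ∧ u (cnt s b 0 n) = c))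
    (hγ : 0 < γ)
    (hs : Tendsto (fun n : ℕ => (cnt s b 0 n : ℝ) / n) atTop (𝓝 γ))
    (hu : Tendsto (fun n : ℕ => (cnt u c 0 n : ℝ) / n) atTop (𝓝 g)) :
    Tendsto (fun n : ℕ => (cnt v cd 0 n : ℝ) / n) atTop (𝓝 (g * γ)) := by
  have hTtop := cnt_tendsto_atTop hγ hs
  have hcomp : Tendsto (fun n : ℕ =>
      (cnt u c 0 (cnt s b 0 n) : ℝ) / (cnt s b 0 n)) atTop (𝓝 g) := hu.comp hTtop
  have hprod := hcomp.mul hs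
  refine hprod.congr (fun n => ?_)
  have hvc := cnt_comp v u s b c cd h n
  by_cases hT : cnt s b 0 n = 0
  · rw [hvc, hT]
    simp [cnt]
  · rw [hvc]
    have hTne : ((cnt s b 0 n : ℝ)) ≠ 0 := Nat.cast_ne_zero.2 hT
    rw [div_mul_div_comm, mul_comm ((cnt s b 0 n : ℝ)) ((n:ℝ))]
    exact mul_div_mul_right _ _ hTne

lemma tendsto_self_div_self : Tendsto (fun n : ℕ => (n:ℝ)/n) atTop (𝓝 1) := by
  have hev : (fun _ : ℕ => (1:ℝ)) =ᶠ[atTop] fun n : ℕ => (n:ℝ)/n := by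
    filter_upwards [eventually_ge_atTop 1] with n hn
    have : (0:ℝ) < n := by exact_mod_cast hn
    field_simp
  exact Tendsto.congr' hev tendsto_const_nhds

lemma aux_main : ∀ d : ℕ, ∀ (A : Type) [DecidableEq A] [Fintype A],
    Fintype.card A = d → ∀ f : A → ℝ, (∀ i, 0 < f i) → ∑ i, f i = 1 →
    ∃ v : ℕ → A, IsBalanced (Nat.clog 2 d) v ∧ ∀ i, HasFreq v i (f i) := by
  intro d
  induction d using Nat.strong_induction_on with
  | _ d IH =>
  intro A _ _ hcard f hpos hsum
  rcases Nat.lt_or_ge d 2 with hd2 | hd2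
  · interval_cases d
    · -- d = 0 : impossible
      haveI : IsEmpty A := Fintype.card_eq_zero_iff.1 hcard
      simp [Finset.univ_eq_empty] at hsum
    · -- d = 1
      obtain ⟨a, ha⟩ := Fintype.card_eq_one_iff.1 hcard
      have hcnt : ∀ (c : A) (i n : ℕ), cnt (fun _ => a) c i n = n := by
        intro c i n
        unfold cnt
        rw [Finset.filter_true_of_mem (fun t _ => ((ha c).symm : a = c))]
        simp
      refine ⟨fun _ => a, ?_, ?_⟩
      · intro i j n c
        rw [hcnt, hcnt]
        simp
      · intro i
        have hfi : f i = 1 := by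
          haveI : Unique A := ⟨⟨a⟩, fun x => ha x⟩
          rw [Fintype.sum_unique] at hsum
          rw [show i = default from (ha i).trans (ha (default : A)).symm]
          exact hsum
        unfold HasFreq
        rw [hfi]
        have : (fun n : ℕ => (cnt (fun _ => a) i 0 n : ℝ) / n) = fun n : ℕ => (n:ℝ)/n := by
          funext n
          rw [hcnt]
        rw [this]
        exact tendsto_self_div_self
  · -- d ≥ 2
    set m := (d+1)/2 with hm
    have hm1 : 1 ≤ m := by omega
    have hmd : m < d := by omega
    have hdm1 : 1 ≤ d - m := by omega
    have hdm2 : d - m ≤ m := by omega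
    have hclog : Nat.clog 2 d = Nat.clog 2 m + 1 := by
      rw [Nat.clog_of_two_le one_lt_two hd2]
      have he : (d + 2 - 1) / 2 = m := by omega
      rw [he]
    have hclog2 : Nat.clog 2 (d - m) ≤ Nat.clog 2 m := Nat.clog_mono_right _ hdm2
    obtain ⟨S, -, hScard⟩ := Finset.exists_subset_card_eq (s := (Finset.univ : Finset A)) (n := m)
      (by rw [Finset.card_univ, hcard]; omega)
    have hcard1 : Fintype.card {x : A // x ∈ S} = m := by
      rw [Fintype.card_coe]; exact hScard
    have hcard2 : Fintype.card {x : A // x ∈ Sᶜ} = d - m := by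
      rw [Fintype.card_coe, Finset.card_compl, hScard, hcard]
    set α := ∑ x ∈ S, f x with hαdef
    set β := ∑ x ∈ Sᶜ, f x with hβdef
    have hαβ : α + β = 1 := by rw [hαdef, hβdef, Finset.sum_add_sum_compl S f]; exact hsum
    have hα : 0 < α :=
      Finset.sum_pos (fun x _ => hpos x) (Finset.card_pos.1 (by rw [hScard]; omega))
    have hβ : 0 < β :=
      Finset.sum_pos (fun x _ => hpos x)
        (Finset.card_pos.1 (by rw [Finset.card_compl, hScard, hcard]; omega))
    have hα1 : α < 1 := by linarith
    have hα0 : (0:ℝ) ≤ α := le_of_lt hα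
    have hαle1 : α ≤ 1 := le_of_lt hα1
    obtain ⟨u1, hu1bal, hu1freq⟩ := IH m hmd {x : A // x ∈ S} hcard1
      (fun x => f x.1 / α) (fun x => div_pos (hpos x.1) hα)
      (by rw [← Finset.sum_div, Finset.sum_coe_sort S f, ← hαdef, div_self hα.ne'])
    obtain ⟨u2, hu2bal, hu2freq⟩ := IH (d - m) (by omega) {x : A // x ∈ Sᶜ} hcard2
      (fun x => f x.1 / β) (fun x => div_pos (hpos x.1) hβ)
      (by rw [← Finset.sum_div, Finset.sum_coe_sort Sᶜ f, ← hβdef, div_self hβ.ne'])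
    have hu2bal' : ∀ i j n c, ((cnt u2 c i n : ℤ) - (cnt u2 c j n : ℤ)).natAbs ≤ Nat.clog 2 m :=
      fun i j n c => le_trans (hu2bal i j n c) hclog2
    set v : ℕ → A := fun n =>
      if stS α n = true then (u1 (cnt (stS α) true 0 n)).1
      else (u2 (cnt (stS α) false 0 n)).1 with hv
    have h1 : ∀ (c : {x : A // x ∈ S}) (n : ℕ),
        v n = c.1 ↔ (stS α n = true ∧ u1 (cnt (stS α) true 0 n) = c) := by
      intro c n
      by_cases hs : stS α n = true
      · have hvn : v n = (u1 (cnt (stS α) true 0 n)).1 := by rw [hv]; simp [hs]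
        rw [hvn]
        constructor
        · intro h
          exact ⟨hs, Subtype.coe_injective h⟩
        · intro h
          exact congrArg Subtype.val h.2
      · have hvn : v n = (u2 (cnt (stS α) false 0 n)).1 := by rw [hv]; simp [hs]
        constructor
        · intro h
          exfalso
          have hmem := (u2 (cnt (stS α) false 0 n)).2
          rw [hvn] at h
          rw [h] at hmem
          exact (Finset.mem_compl.1 hmem) c.2
        · intro h
          exact absurd h.1 hs
    have h2 : ∀ (c : {x : A // x ∈ Sᶜ}) (n : ℕ),
        v n = c.1 ↔ (stS α n = false ∧ u2 (cnt (stS α) false 0 n) = c) := by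
      intro c n
      by_cases hs : stS α n = true
      · have hvn : v n = (u1 (cnt (stS α) true 0 n)).1 := by rw [hv]; simp [hs]
        constructor
        · intro h
          exfalso
          have hmem := (u1 (cnt (stS α) true 0 n)).2
          rw [hvn] at h
          rw [h] at hmem
          exact (Finset.mem_compl.1 c.2) hmem
        · intro h
          rw [hs] at h
          exact absurd h.1 (by simp)
      · have hs' : stS α n = false := by simpa using hs
        have hvn : v n = (u2 (cnt (stS α) false 0 n)).1 := by rw [hv]; simp [hs]
        rw [hvn]
        constructor
        · intro h
          exact ⟨hs', Subtype.coe_injective h⟩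
        · intro h
          exact congrArg Subtype.val h.2
    refine ⟨v, ?_, ?_⟩
    · intro i j n cd
      rw [hclog]
      by_cases hc : cd ∈ S
      · exact balanced_transfer v u1 (stS α) true ⟨cd, hc⟩ cd (fun n => h1 ⟨cd, hc⟩ n)
          (stS_true_balanced hα0 hαle1) hu1bal i j n
      · exact balanced_transfer v u2 (stS α) false ⟨cd, Finset.mem_compl.2 hc⟩ cd
          (fun n => h2 ⟨cd, Finset.mem_compl.2 hc⟩ n)
          (stS_false_balanced hα0 hαle1) hu2bal' i j n
    · intro cd
      unfold HasFreq
      by_cases hc : cd ∈ S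
      · have := hasfreq_transfer v u1 (stS α) true ⟨cd, hc⟩ cd
          (fun n => h1 ⟨cd, hc⟩ n) hα (stS_freq_true hα0 hαle1) (hu1freq ⟨cd, hc⟩)
        rwa [div_mul_cancel₀ _ hα.ne'] at this
      · have := hasfreq_transfer v u2 (stS α) false ⟨cd, Finset.mem_compl.2 hc⟩ cd
          (fun n => h2 ⟨cd, Finset.mem_compl.2 hc⟩ n) (by linarith : (0:ℝ) < 1 - α)
          (stS_freq_false hα0 hαle1) (hu2freq ⟨cd, Finset.mem_compl.2 hc⟩)
        have hβeq : β = 1 - α := by linarith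
        rw [← hβeq, div_mul_cancel₀ _ hβ.ne'] at this
        exact this


/-- For every `d ≥ 1` and every positive vector `f` summing to `1`, there is a
`⌈log₂ d⌉`-balanced sequence over a `d`-letter alphabet whose letter frequencies
are given by `f`; in particular `BT(d) ≤ ⌈log₂ d⌉`. -/
theorem freq_of_balanced_exists (d : ℕ) (hd : 1 ≤ d) (f : Fin d → ℝ)
    (hpos : ∀ i, 0 < f i) (hsum : ∑ i, f i = 1) :
    ∃ v : ℕ → Fin d, IsBalanced (Nat.clog 2 d) v ∧ ∀ i, HasFreq v i (f i) := by
  exact aux_main d (Fin d) (Fintype.card_fin d) f hpos hsum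
end

section
/- Let u be a sequence over {a, b} in which the letter a has frequency f_a ∈ (0, 1), and let 𝐚 : ℕ → 𝒜 and 𝐛 : ℕ → ℬ be sequences over disjoint alphabets such that a letter j ∈ 𝒜 has frequency γ in 𝐚. Then the letter j has frequency f_a · γ in the colouring v = colour(u, 𝐚, 𝐛). -/
open Finset Filter Topology

/-- Colouring of a binary sequence `u` (letter `a` is `true`, letter `b` is `false`)
by a sequence `va` over `A` and a sequence `vb` over `B` (disjoint alphabets,
realized as the two summands of `A ⊕ B`): the `n`-th occurrence of `a` in `u`
is replaced by `va n`, and the `n`-th occurrence of `b` by `vb n`. -/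
def colour {A B : Type*} (u : ℕ → Bool) (va : ℕ → A) (vb : ℕ → B) (N : ℕ) : A ⊕ B :=
  if u N then Sum.inl (va (cnt u true 0 N)) else Sum.inr (vb (cnt u false 0 N))

lemma cnt_zero_succ {A : Type*} [DecidableEq A] (u : ℕ → A) (c : A) (n : ℕ) :
    cnt u c 0 (n+1) = cnt u c 0 n + if u n = c then 1 else 0 := by
  simp only [cnt, zero_add]
  rw [Nat.Ico_zero_eq_range, Finset.range_add_one, Finset.filter_insert]
  split
  · rw [Finset.card_insert_of_notMem (by simp), Nat.Ico_zero_eq_range]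
  · simp

lemma colour_cnt {A B : Type*} [DecidableEq A] [DecidableEq B]
    (u : ℕ → Bool) (va : ℕ → A) (vb : ℕ → B) (j : A) (n : ℕ) :
    cnt (colour u va vb) (Sum.inl j) 0 n = cnt va j 0 (cnt u true 0 n) := by
  induction n with
  | zero => simp [cnt]
  | succ n ih =>
    rw [cnt_zero_succ, cnt_zero_succ u true, ih]
    cases hn : u n with
    | false => simp [colour, hn]
    | true =>
      rw [if_pos rfl, cnt_zero_succ va]
      simp [colour, hn]

/-- If the letter `a` (i.e. `true`) has frequency `f_a ∈ (0,1)` in `u` and the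
letter `j` has frequency `γ` in `va`, then `j` has frequency `f_a·γ` in
`colour(u, va, vb)`. -/
theorem colour_letter_freq {A B : Type*} [DecidableEq A] [DecidableEq B]
    (u : ℕ → Bool) (va : ℕ → A) (vb : ℕ → B)
    (fa γ : ℝ) (hfa : fa ∈ Set.Ioo (0 : ℝ) 1) (hu : HasFreq u true fa)
    (j : A) (hj : HasFreq va j γ) :
    HasFreq (colour u va vb) (Sum.inl j) (fa * γ) := by
  have hatop : Tendsto (fun n => cnt u true 0 n) atTop atTop := by
    have h1 : Tendsto (fun n : ℕ => (cnt u true 0 n : ℝ) / n * n) atTop atTop :=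
      Filter.Tendsto.pos_mul_atTop hfa.1 hu tendsto_natCast_atTop_atTop
    have h2 : Tendsto (fun n : ℕ => (cnt u true 0 n : ℝ)) atTop atTop := by
      refine h1.congr' ?_
      filter_upwards [eventually_gt_atTop 0] with n hn
      field_simp
    exact tendsto_natCast_atTop_iff.mp h2
  have hmain : Tendsto (fun n : ℕ =>
      (cnt va j 0 (cnt u true 0 n) : ℝ) / (cnt u true 0 n) * ((cnt u true 0 n : ℝ) / n))
      atTop (𝓝 (γ * fa)) :=
    (hj.comp hatop).mul hu
  have : fa * γ = γ * fa := mul_comm _ _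
  rw [HasFreq, this]
  refine hmain.congr fun n => ?_
  rw [colour_cnt]
  rcases eq_or_ne (cnt u true 0 n) 0 with h | h
  · rw [h]; simp [cnt]
  · rw [div_mul_div_comm, mul_comm ((cnt u true 0 n : ℝ)) (n : ℝ),
      mul_div_mul_right _ _ (by exact_mod_cast h)]
end

section
/- A sequence u over a finite alphabet 𝒜 is k-balanced for some k ∈ ℕ if and only if u has uniform letter frequencies (f_a)_{a∈𝒜} and there exists a constant B such that for every factor w of u and every letter a ∈ 𝒜, one has | |w|_a − f_a·|w| | ≤ B, where |w| is the length of w and |w|_a the number of occurrences of a in w. -/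
open Finset Filter Topology

lemma cnt_zero' {A : Type*} [DecidableEq A] (u : ℕ → A) (c : A) (i : ℕ) : cnt u c i 0 = 0 := by
  simp [cnt]

lemma cnt_add {A : Type*} [DecidableEq A] (u : ℕ → A) (c : A) (i p q : ℕ) :
    cnt u c i (p + q) = cnt u c i p + cnt u c (i + p) q := by
  unfold cnt
  rw [show i + (p + q) = (i + p) + q by ring, ← Finset.Ico_union_Ico_eq_Ico
      (Nat.le_add_right i p) (Nat.le_add_right (i+p) q), Finset.filter_union,
    Finset.card_union_of_disjoint]
  exact Finset.disjoint_filter_filter (Finset.Ico_disjoint_Ico_consecutive i (i+p) (i+p+q))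

lemma bal_real {A : Type*} [DecidableEq A] {k : ℕ} {u : ℕ → A} (h : IsBalanced k u)
    (c : A) (i j n : ℕ) : |(cnt u c i n : ℝ) - cnt u c j n| ≤ k := by
  have := h i j n c
  have h2 : (|(cnt u c i n : ℤ) - cnt u c j n| : ℤ) ≤ k := by
    rw [Int.abs_eq_natAbs]; exact_mod_cast this
  have heq : ((cnt u c i n : ℝ) - cnt u c j n) = (((cnt u c i n : ℤ) - cnt u c j n : ℤ) : ℝ) := by
    push_cast; ring
  rw [heq, ← Int.cast_abs]
  exact_mod_cast h2

lemma key {A : Type*} [DecidableEq A] {k : ℕ} {u : ℕ → A} (h : IsBalanced k u) (c : A) :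
    ∃ fc : ℝ, Tendsto (fun n : ℕ => (cnt u c 0 n : ℝ) / n) atTop (𝓝 fc) ∧
      ∀ i n : ℕ, |(cnt u c i n : ℝ) - fc * n| ≤ 2 * k := by
  set x : ℕ → ℝ := fun n => (cnt u c 0 n : ℝ) / n with hx
  -- block decomposition bound
  have hmul : ∀ m n : ℕ, |(cnt u c 0 (m * n) : ℝ) - m * cnt u c 0 n| ≤ m * k := by
    intro m n
    induction m with
    | zero => simp [cnt_zero']
    | succ m ih =>
      have hdec : cnt u c 0 ((m+1) * n) = cnt u c 0 (m * n) + cnt u c (m * n) n := by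
        rw [show (m+1) * n = m * n + n by ring, cnt_add]
        simp
      rw [hdec]
      push_cast
      have hb := bal_real h c (m * n) 0 n
      calc |(cnt u c 0 (m*n) : ℝ) + cnt u c (m*n) n - (m+1) * cnt u c 0 n|
          = |((cnt u c 0 (m*n) : ℝ) - m * cnt u c 0 n) + ((cnt u c (m*n) n : ℝ) - cnt u c 0 n)| := by
            ring_nf
        _ ≤ |(cnt u c 0 (m*n) : ℝ) - m * cnt u c 0 n| + |(cnt u c (m*n) n : ℝ) - cnt u c 0 n| :=
            abs_add_le _ _
        _ ≤ m * k + k := add_le_add ih hb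
        _ = (m+1) * k := by ring
  -- |x (m*n) - x n| ≤ k / n for m,n ≥ 1
  have hxd : ∀ m n : ℕ, 1 ≤ m → 1 ≤ n → |x (m * n) - x n| ≤ k / n := by
    intro m n hm hn
    have hm' : (0:ℝ) < (m:ℝ) := by exact_mod_cast hm
    have hn' : (0:ℝ) < (n:ℝ) := by exact_mod_cast hn
    have heq : x (m * n) - x n = ((cnt u c 0 (m*n) : ℝ) - m * cnt u c 0 n) / ((m:ℝ) * n) := by
      rw [hx]
      push_cast
      field_simp
    rw [heq, abs_div, abs_of_pos (by positivity : (0:ℝ) < (m:ℝ)*n)]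
    have heq2 : (k:ℝ) / n = ((m:ℝ) * k) / ((m:ℝ) * n) := by
      field_simp
    rw [heq2]
    exact div_le_div_of_nonneg_right (hmul m n) (by positivity) |>.trans_eq rfl
  -- symmetric bound
  have hsym : ∀ m n : ℕ, 1 ≤ m → 1 ≤ n → |x m - x n| ≤ k / m + k / n := by
    intro m n hm hn
    have h1 := hxd n m hn hm
    have h2 := hxd m n hm hn
    rw [Nat.mul_comm] at h1
    calc |x m - x n| = |(x m - x (m*n)) + (x (m*n) - x n)| := by ring_nf
      _ ≤ |x m - x (m*n)| + |x (m*n) - x n| := abs_add_le _ _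
      _ ≤ k / m + k / n := add_le_add (by rwa [abs_sub_comm]) h2
  have hcauchy : CauchySeq x := by
    rw [Metric.cauchySeq_iff']
    intro ε hε
    obtain ⟨N, hN⟩ := exists_nat_gt (2 * k / ε + 1)
    have hN1 : 1 ≤ N := by
      by_contra hc
      push_neg at hc
      interval_cases N
      have : (0:ℝ) ≤ 2 * k / ε := by positivity
      linarith
    have hNpos : (0:ℝ) < N := by exact_mod_cast hN1
    refine ⟨N, fun n hn => ?_⟩
    have hn1 : 1 ≤ n := le_trans hN1 hn
    have hnpos : (0:ℝ) < n := by exact_mod_cast hn1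
    have := hsym n N hn1 hN1
    rw [Real.dist_eq]
    have hle : (k:ℝ) / n ≤ k / N := by
      apply div_le_div_of_nonneg_left (by positivity) hNpos
      exact_mod_cast hn
    have h2k : 2 * (k:ℝ) / N < ε := by
      rw [div_lt_iff₀ hNpos]
      have : 2 * (k:ℝ) / ε < N := by linarith
      rw [div_lt_iff₀ hε] at this
      linarith
    calc |x n - x N| ≤ k / n + k / N := this
      _ ≤ k / N + k / N := by linarith
      _ = 2 * k / N := by ring
      _ < ε := h2k
  obtain ⟨fc, hfc⟩ := cauchySeq_tendsto_of_complete hcauchy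
  refine ⟨fc, hfc, ?_⟩
  -- |x n - fc| ≤ k / n for n ≥ 1
  have hlim : ∀ n : ℕ, 1 ≤ n → |x n - fc| ≤ k / n := by
    intro n hn
    have t1 : Tendsto (fun m : ℕ => |x n - x m|) atTop (𝓝 (|x n - fc|)) :=
      ((tendsto_const_nhds.sub hfc).abs)
    have t2 : Tendsto (fun m : ℕ => (k:ℝ) / m + k / n) atTop (𝓝 (0 + k / n)) :=
      (tendsto_const_div_atTop_nhds_zero_nat (k:ℝ)).add tendsto_const_nhds
    have := le_of_tendsto_of_tendsto t1 t2 ?_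
    · simpa using this
    · filter_upwards [eventually_ge_atTop 1] with m hm
      have := hsym n m hn hm
      simpa [add_comm] using this
  intro i n
  rcases Nat.eq_zero_or_pos n with rfl | hn
  · simp [cnt_zero']
  have hn' : (0:ℝ) < n := by exact_mod_cast hn
  have h1 : |(cnt u c 0 n : ℝ) - fc * n| ≤ k := by
    have := hlim n hn
    rw [hx] at this
    have := mul_le_mul_of_nonneg_left this hn'.le
    rw [← abs_of_pos hn', ← abs_mul, abs_of_pos hn'] at this
    calc |(cnt u c 0 n : ℝ) - fc * n| = |(n:ℝ) * ((cnt u c 0 n : ℝ) / n - fc)| := by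
          rw [mul_sub, mul_div_cancel₀ _ hn'.ne']; ring_nf
      _ ≤ (n:ℝ) * (k / n) := this
      _ = k := by field_simp
  have h2 := bal_real h c i 0 n
  calc |(cnt u c i n : ℝ) - fc * n|
      = |((cnt u c i n : ℝ) - cnt u c 0 n) + ((cnt u c 0 n : ℝ) - fc * n)| := by ring_nf
    _ ≤ |(cnt u c i n : ℝ) - cnt u c 0 n| + |(cnt u c 0 n : ℝ) - fc * n| := abs_add_le _ _
    _ ≤ k + k := add_le_add h2 h1
    _ = 2 * k := by ring

/-- Berthé–Delecroix: a sequence over a finite alphabet is `k`-balanced for some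
`k` iff it has uniform letter frequencies `(f_a)` and there is a constant `B`
with `| |w|_a - f_a·|w| | ≤ B` for every factor `w` and letter `a`. -/
theorem balanced_iff_uniform_freq_bounded_discrepancy
    {A : Type*} [Fintype A] [DecidableEq A] (u : ℕ → A) :
    (∃ k : ℕ, IsBalanced k u) ↔
      ∃ f : A → ℝ,
        (∀ a : A, ∀ k : ℕ → ℕ,
          Tendsto (fun n : ℕ => (cnt u a (k n) n : ℝ) / n) atTop (𝓝 (f a))) ∧
        ∃ B : ℝ, ∀ (a : A) (i n : ℕ), |(cnt u a i n : ℝ) - f a * n| ≤ B := by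
  constructor
  · rintro ⟨k, hk⟩
    choose f hf1 hf2 using fun c => key hk c
    refine ⟨f, ?_, ⟨2 * k, fun a i n => hf2 a i n⟩⟩
    intro a ks
    rw [tendsto_iff_dist_tendsto_zero]
    apply squeeze_zero' (g := fun n : ℕ => 2 * (k:ℝ) / n)
    · filter_upwards with n using dist_nonneg
    · filter_upwards [eventually_ge_atTop 1] with n hn
      have hn' : (0:ℝ) < n := by exact_mod_cast hn
      rw [Real.dist_eq]
      have := hf2 a (ks n) n
      calc |(cnt u a (ks n) n : ℝ) / n - f a|
          = |(cnt u a (ks n) n : ℝ) - f a * n| / n := by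
            rw [← abs_of_pos hn', ← abs_div]
            congr 1
            field_simp
            rw [abs_of_pos hn']; ring
        _ ≤ 2 * k / n := by
            apply div_le_div_of_nonneg_right this hn'.le
    · exact tendsto_const_div_atTop_nhds_zero_nat _
  · rintro ⟨f, hfreq, B, hB⟩
    refine ⟨⌈2 * B⌉₊, fun i j n c => ?_⟩
    have h1 := hB c i n
    have h2 := hB c j n
    have habs : |(cnt u c i n : ℝ) - cnt u c j n| ≤ 2 * B := by
      calc |(cnt u c i n : ℝ) - cnt u c j n|
          = |((cnt u c i n : ℝ) - f c * n) - ((cnt u c j n : ℝ) - f c * n)| := by ring_nf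
        _ ≤ |(cnt u c i n : ℝ) - f c * n| + |(cnt u c j n : ℝ) - f c * n| := abs_sub _ _
        _ ≤ B + B := add_le_add h1 h2
        _ = 2 * B := by ring
    have heq : ((((cnt u c i n : ℤ) - cnt u c j n).natAbs : ℕ) : ℝ)
        = |(cnt u c i n : ℝ) - cnt u c j n| := by
      rw [Nat.cast_natAbs]
      push_cast
      ring_nf
    have : ((((cnt u c i n : ℤ) - cnt u c j n).natAbs : ℕ) : ℝ) ≤ (⌈2 * B⌉₊ : ℝ) :=
      heq.trans_le (habs.trans (Nat.le_ceil _))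
    exact_mod_cast this
end
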